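/- Let E be a metric space. The space B_b(E) of bounded Borel measurable real functions on E, endowed with the locally convex topology τ_K generated by the seminorms p_{K,μ}(f) = sup_{x∈K}|f(x)| + |∫_E f dμ| (K compact, μ ∈ ca(E)), is sequentially complete. -/

import Mathlib

open Filter Topology MeasureTheory

/-- Integration of a function against a finite countably additive signed Borel measure,
via its Jordan decomposition. -/
noncomputable def intSM' {E : Type*} [MeasurableSpace E]
    (s : SignedMeasure E) (f : E → ℝ) : ℝ :=
  (∫ x, f x ∂s.toJordanDecomposition.posPart) -
    ∫ x, f x ∂s.toJordanDecomposition.negPart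

/-- The space B_b(E) of bounded Borel measurable real functions, as a submodule of E → ℝ. -/
def BbSub (E : Type*) [MeasurableSpace E] : Submodule ℝ (E → ℝ) where
  carrier := {f | Measurable f ∧ ∃ C : ℝ, ∀ x, |f x| ≤ C}
  add_mem' := by
    rintro f g ⟨hf, Cf, hCf⟩ ⟨hg, Cg, hCg⟩
    exact ⟨hf.add hg, Cf + Cg, fun x =>
      (abs_add_le _ _).trans (add_le_add (hCf x) (hCg x))⟩
  zero_mem' := ⟨measurable_const, 0, by simp⟩
  smul_mem' := by
    rintro c f ⟨hf, Cf, hCf⟩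
    refine ⟨hf.const_smul c, |c| * Cf, fun x => ?_⟩
    simp only [Pi.smul_apply, smul_eq_mul, abs_mul]
    exact mul_le_mul_of_nonneg_left (hCf x) (abs_nonneg c)

/-- The locally convex topology τ_K on B_b(E), generated by the seminorms
p_{K,μ}(f) = sup_{x∈K}|f(x)| + |∫ f dμ| over nonempty compact K and μ ∈ ca(E):
the initial topology of uniform convergence on each nonempty compact set together with
the integration functionals. -/
noncomputable def tauKBb (E : Type*) [MetricSpace E] [MeasurableSpace E] [BorelSpace E] :
    TopologicalSpace (BbSub E) :=
  (⨅ (K : Set E) (_ : IsCompact K) (_ : K.Nonempty),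
      TopologicalSpace.induced
        (fun f : BbSub E => UniformFun.ofFun fun x : K => f.1 x)
        inferInstance) ⊓
    ⨅ s : SignedMeasure E,
      TopologicalSpace.induced (fun f : BbSub E => intSM' s f.1) inferInstance


section aux
variable {E : Type*} [MeasurableSpace E]

lemma integrable_of_bdd {μ : Measure E} [IsFiniteMeasure μ] {f : E → ℝ}
    (hm : Measurable f) {C : ℝ} (hC : ∀ x, |f x| ≤ C) : Integrable f μ :=
  (integrable_const C).mono' hm.aestronglyMeasurable
    (Filter.Eventually.of_forall fun x => by simpa using hC x)

lemma jordan_sub_key (μ ν : Measure E) [IsFiniteMeasure μ] [IsFiniteMeasure ν] :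
    (μ.toSignedMeasure - ν.toSignedMeasure).toJordanDecomposition.posPart + ν =
      (μ.toSignedMeasure - ν.toSignedMeasure).toJordanDecomposition.negPart + μ := by
  set s := μ.toSignedMeasure - ν.toSignedMeasure with hs
  have h := s.toSignedMeasure_toJordanDecomposition
  ext A hA
  have h2 := congrArg (fun m : SignedMeasure E => m A) h
  simp only [JordanDecomposition.toSignedMeasure, MeasureTheory.VectorMeasure.sub_apply,
    Measure.toSignedMeasure_apply_measurable hA, hs] at h2
  have hp : s.toJordanDecomposition.posPart A ≠ ⊤ := measure_ne_top _ _
  have hn : s.toJordanDecomposition.negPart A ≠ ⊤ := measure_ne_top _ _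
  have hμ : μ A ≠ ⊤ := measure_ne_top _ _
  have hν : ν A ≠ ⊤ := measure_ne_top _ _
  simp only [Measure.add_apply]
  rw [← ENNReal.toReal_eq_toReal_iff' (by simp [ENNReal.add_ne_top, hp, hν])
    (by simp [ENNReal.add_ne_top, hn, hμ]), ENNReal.toReal_add hp hν, ENNReal.toReal_add hn hμ]
  simp only [measureReal_def] at h2
  linarith

end aux
section aux2
variable {E : Type*} [MeasurableSpace E]

lemma mem_BbSub_integrable {μ : Measure E} [IsFiniteMeasure μ] {f : E → ℝ}
    (hf : f ∈ BbSub E) : Integrable f μ := by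
  obtain ⟨hm, C, hC⟩ := hf
  exact integrable_of_bdd hm hC

lemma intSM'_sub_toSignedMeasure (μ ν : Measure E) [IsFiniteMeasure μ] [IsFiniteMeasure ν]
    {f : E → ℝ} (hf : f ∈ BbSub E) :
    intSM' (μ.toSignedMeasure - ν.toSignedMeasure) f = (∫ x, f x ∂μ) - ∫ x, f x ∂ν := by
  have key := jordan_sub_key μ ν
  have h1 : (∫ x, f x ∂((μ.toSignedMeasure - ν.toSignedMeasure).toJordanDecomposition.posPart + ν))
      = ∫ x, f x ∂((μ.toSignedMeasure - ν.toSignedMeasure).toJordanDecomposition.negPart + μ) := by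
    rw [key]
  rw [integral_add_measure (mem_BbSub_integrable hf) (mem_BbSub_integrable hf),
    integral_add_measure (mem_BbSub_integrable hf) (mem_BbSub_integrable hf)] at h1
  unfold intSM'
  linarith

lemma intSM'_sub (s : SignedMeasure E) {u v : E → ℝ} (hu : u ∈ BbSub E) (hv : v ∈ BbSub E) :
    intSM' s (u - v) = intSM' s u - intSM' s v := by
  unfold intSM'
  simp only [Pi.sub_apply]
  rw [integral_sub (mem_BbSub_integrable hu) (mem_BbSub_integrable hv),
    integral_sub (mem_BbSub_integrable hu) (mem_BbSub_integrable hv)]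
  ring

lemma intSM'_zero (s : SignedMeasure E) : intSM' s (0 : E → ℝ) = 0 := by
  unfold intSM'; simp

end aux2

section nhdslem
variable {E : Type*} [MetricSpace E] [MeasurableSpace E] [BorelSpace E]

lemma nhds_tauKBb (g : BbSub E) :
    @nhds _ (tauKBb E) g =
      (⨅ (K : Set E) (_ : IsCompact K) (_ : K.Nonempty),
        Filter.comap (fun f : BbSub E => UniformFun.ofFun fun x : K => f.1 x)
          (𝓝 (UniformFun.ofFun fun x : K => g.1 x))) ⊓
      ⨅ s : SignedMeasure E,
        Filter.comap (fun f : BbSub E => intSM' s f.1) (𝓝 (intSM' s g.1)) := by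
  refine (_root_.nhds_inf (t₁ := ⨅ (K : Set E) (_ : IsCompact K) (_ : K.Nonempty),
      TopologicalSpace.induced
        (fun f : BbSub E => UniformFun.ofFun fun x : K => f.1 x) inferInstance)
    (t₂ := ⨅ s : SignedMeasure E,
      TopologicalSpace.induced (fun f : BbSub E => intSM' s f.1) inferInstance)).trans ?_
  congr 1
  · refine (_root_.nhds_iInf).trans (iInf_congr fun K => ?_)
    refine (_root_.nhds_iInf).trans (iInf_congr fun hK => ?_)
    refine (_root_.nhds_iInf).trans (iInf_congr fun hne => ?_)
    exact nhds_induced _ _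
  · exact (_root_.nhds_iInf).trans (iInf_congr fun s => nhds_induced _ _)

lemma mem_nhds_zero_compact {K : Set E} (hK : IsCompact K) (hne : K.Nonempty) {ε : ℝ}
    (hε : 0 < ε) :
    {h : BbSub E | ∀ x ∈ K, |h.1 x| < ε} ∈ @nhds _ (tauKBb E) (0 : BbSub E) := by
  rw [nhds_tauKBb]
  refine Filter.mem_inf_of_left ?_
  refine Filter.mem_iInf_of_mem K (Filter.mem_iInf_of_mem hK (Filter.mem_iInf_of_mem hne ?_))
  refine Filter.mem_comap.2 ⟨_,
    (UniformFun.hasBasis_nhds K ℝ _).mem_of_mem (Metric.dist_mem_uniformity hε), ?_⟩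
  intro h hh x hx
  have := hh ⟨x, hx⟩
  simp only [UniformFun.gen, Set.mem_setOf_eq, UniformFun.toFun_ofFun] at this
  simpa [Real.dist_eq] using this

lemma mem_nhds_zero_sm (s : SignedMeasure E) {ε : ℝ} (hε : 0 < ε) :
    {h : BbSub E | |intSM' s h.1| < ε} ∈ @nhds _ (tauKBb E) (0 : BbSub E) := by
  rw [nhds_tauKBb]
  refine Filter.mem_inf_of_right ?_
  refine Filter.mem_iInf_of_mem s ?_
  refine Filter.mem_comap.2 ⟨Metric.ball (intSM' s (0 : BbSub E).1) ε, Metric.ball_mem_nhds _ hε, ?_⟩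
  intro h hh
  have h0 : intSM' s ((0 : BbSub E) : E → ℝ) = 0 := intSM'_zero s
  simp only [Set.mem_preimage, Metric.mem_ball, Real.dist_eq, h0, sub_zero] at hh
  simpa using hh

end nhdslem


lemma lp_summable_norm (a : lp (fun _ : ℕ => ℝ) 1) : Summable fun k => ‖a k‖ := by
  have := (lp.memℓp a).summable (p := 1) (by norm_num)
  simpa using this

lemma lp_norm_eq (a : lp (fun _ : ℕ => ℝ) 1) : ‖a‖ = ∑' k, ‖a k‖ := by
  have := lp.norm_eq_tsum_rpow (p := 1) (by norm_num) a
  simpa using this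

lemma exists_pairCLM (c : ℕ → ℝ) (C : ℝ) (hC : ∀ k, |c k| ≤ C) :
    ∃ T : lp (fun _ : ℕ => ℝ) 1 →L[ℝ] ℝ, ∀ a, T a = ∑' k, a k * c k := by
  have hb : ∀ (a : lp (fun _ : ℕ => ℝ) 1) (k : ℕ), ‖a k * c k‖ ≤ ‖a k‖ * C := fun a k => by
    rw [norm_mul]
    exact mul_le_mul_of_nonneg_left ((Real.norm_eq_abs _ ▸ hC k)) (norm_nonneg _)
  have hs : ∀ a : lp (fun _ : ℕ => ℝ) 1, Summable fun k => a k * c k := fun a =>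
    Summable.of_norm_bounded ((lp_summable_norm a).mul_right C) (hb a)
  have hsn : ∀ a : lp (fun _ : ℕ => ℝ) 1, Summable fun k => ‖a k * c k‖ := fun a =>
    Summable.of_nonneg_of_le (fun _ => norm_nonneg _) (hb a) ((lp_summable_norm a).mul_right C)
  refine ⟨LinearMap.mkContinuous
    { toFun := fun a => ∑' k, a k * c k
      map_add' := fun a b => by
        rw [← Summable.tsum_add (hs a) (hs b)]
        exact tsum_congr fun k => by
          simp only [lp.coeFn_add, Pi.add_apply]; ring
      map_smul' := fun r a => by
        simp only [RingHom.id_apply, smul_eq_mul]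
        rw [← tsum_mul_left]
        exact tsum_congr fun k => by
          simp only [lp.coeFn_smul, Pi.smul_apply, smul_eq_mul]; ring } C (fun a => ?_), fun a => rfl⟩
  simp only [LinearMap.coe_mk, AddHom.coe_mk]
  calc ‖∑' k, a k * c k‖ ≤ ∑' k, ‖a k * c k‖ := norm_tsum_le_tsum_norm (hsn a)
    _ ≤ ∑' k, ‖a k‖ * C :=
        Summable.tsum_le_tsum (hb a) (hsn a) ((lp_summable_norm a).mul_right C)
    _ = C * ‖a‖ := by rw [tsum_mul_right, lp_norm_eq a]; ring

lemma exists_sm {E : Type*} [MeasurableSpace E] [MeasurableSingletonClass E]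
    (x : ℕ → E) (a : ℕ → ℝ) (ha : Summable fun k => |a k|) :
    ∃ s : SignedMeasure E, ∀ u : E → ℝ, u ∈ BbSub E →
      intSM' s u = ∑' k, a k * u (x k) := by
  set μp : Measure E := Measure.sum fun k => ENNReal.ofReal (a k) • Measure.dirac (x k) with hμp
  set μm : Measure E := Measure.sum fun k => ENNReal.ofReal (-a k) • Measure.dirac (x k) with hμm
  have hfin : ∀ b : ℕ → ℝ, (∀ k, |b k| ≤ |a k|) →
      IsFiniteMeasure (Measure.sum fun k => ENNReal.ofReal (b k) • Measure.dirac (x k)) := by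
    intro b hb
    constructor
    rw [Measure.sum_apply _ MeasurableSet.univ]
    have : ∀ k, (ENNReal.ofReal (b k) • Measure.dirac (x k)) Set.univ ≤ ENNReal.ofReal (|a k|) := by
      intro k
      rw [Measure.smul_apply, smul_eq_mul, measure_univ, mul_one]
      exact ENNReal.ofReal_le_ofReal ((le_abs_self _).trans (hb k))
    calc (∑' k, (ENNReal.ofReal (b k) • Measure.dirac (x k)) Set.univ)
        ≤ ∑' k, ENNReal.ofReal (|a k|) := ENNReal.tsum_le_tsum this
      _ = ENNReal.ofReal (∑' k, |a k|) :=
          (ENNReal.ofReal_tsum_of_nonneg (fun k => abs_nonneg _) ha).symm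
      _ < ⊤ := ENNReal.ofReal_lt_top
  haveI h1 : IsFiniteMeasure μp := hfin a (fun k => le_refl _)
  haveI h2 : IsFiniteMeasure μm := hfin (fun k => -a k) (fun k => (abs_neg _).le)
  refine ⟨μp.toSignedMeasure - μm.toSignedMeasure, fun u hu => ?_⟩
  obtain ⟨hm, Cu, hCu⟩ := hu
  have hCu0 : 0 ≤ Cu := le_trans (abs_nonneg _) (hCu (x 0))
  have hint : ∀ b : ℕ → ℝ, (∀ k, |b k| ≤ |a k|) →
      (∫ y, u y ∂(Measure.sum fun k => ENNReal.ofReal (b k) • Measure.dirac (x k)))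
        = ∑' k, max (b k) 0 * u (x k) := by
    intro b hb
    haveI := hfin b hb
    rw [integral_sum_measure (mem_BbSub_integrable ⟨hm, Cu, hCu⟩)]
    refine tsum_congr fun k => ?_
    rw [integral_smul_measure, integral_dirac, smul_eq_mul]
    congr 1

  have hsummax : ∀ b : ℕ → ℝ, (∀ k, |b k| ≤ |a k|) →
      Summable fun k => max (b k) 0 * u (x k) := by
    intro b hb
    refine Summable.of_norm_bounded ((ha.mul_right Cu)) fun k => ?_
    rw [norm_mul, Real.norm_eq_abs, Real.norm_eq_abs]
    refine mul_le_mul ?_ (hCu _) (abs_nonneg _) (abs_nonneg _)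
    rw [abs_of_nonneg (le_max_right _ _)]
    exact max_le ((le_abs_self _).trans (hb k)) (abs_nonneg _)
  rw [intSM'_sub_toSignedMeasure μp μm ⟨hm, Cu, hCu⟩, hint a (fun k => le_refl _),
    hint (fun k => -a k) (fun k => (abs_neg _).le),
    ← Summable.tsum_sub (hsummax a (fun k => le_refl _)) (hsummax (fun k => -a k) (fun k => (abs_neg _).le))]
  refine tsum_congr fun k => ?_
  rw [← sub_mul, max_zero_sub_max_neg_zero_eq_self]

lemma my_ubp (T : ℕ → (lp (fun _ : ℕ => ℝ) 1 →L[ℝ] ℝ))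
    (hub : ∀ a : lp (fun _ : ℕ => ℝ) 1, ∃ B, ∀ j, ‖T j a‖ ≤ B) :
    ∃ C', ∀ j, ‖T j‖ ≤ C' :=
  banach_steinhaus hub

/-- (B_b(E), τ_K) is sequentially complete: every τ_K-Cauchy sequence of
bounded Borel functions τ_K-converges to a bounded Borel function. -/
theorem stmt16 {E : Type*} [MetricSpace E] [MeasurableSpace E] [BorelSpace E]
    (f : ℕ → BbSub E)
    (hf : ∀ U ∈ @nhds _ (tauKBb E) (0 : BbSub E),
      ∃ N : ℕ, ∀ m ≥ N, ∀ n ≥ N, f m - f n ∈ U) :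
    ∃ g : BbSub E, Tendsto f atTop (@nhds _ (tauKBb E) g) := by
  classical
  set F : ℕ → E → ℝ := fun n => ((f n : BbSub E) : E → ℝ) with hFdef
  have hsub : ∀ m n : ℕ, ((f m - f n : BbSub E) : E → ℝ) = F m - F n := fun m n => rfl
  have hC1 : ∀ (K : Set E), IsCompact K → K.Nonempty → ∀ ε : ℝ, 0 < ε →
      ∃ N, ∀ m ≥ N, ∀ n ≥ N, ∀ x ∈ K, |F m x - F n x| < ε := by
    intro K hK hne ε hε
    obtain ⟨N, hN⟩ := hf _ (mem_nhds_zero_compact hK hne hε)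
    refine ⟨N, fun m hm n hn x hx => ?_⟩
    have h2 := hN m hm n hn x hx
    rw [hsub m n] at h2
    exact h2
  have hpt : ∀ x : E, ∃ y : ℝ, Tendsto (fun n => F n x) atTop (𝓝 y) := by
    intro x
    refine cauchySeq_tendsto_of_complete (Metric.cauchySeq_iff.2 fun ε hε => ?_)
    obtain ⟨N, hN⟩ := hC1 {x} isCompact_singleton ⟨x, rfl⟩ ε hε
    exact ⟨N, fun m hm n hn => by
      rw [Real.dist_eq]; exact hN m hm n hn x rfl⟩
  choose g0 hg0 using hpt
  have hintsub : ∀ (s : SignedMeasure E) (m n : ℕ),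
      intSM' s (F m - F n) = intSM' s (F m) - intSM' s (F n) :=
    fun s m n => intSM'_sub s (f m).2 (f n).2
  have hC2 : ∀ s : SignedMeasure E, ∃ B : ℝ, ∀ m, |intSM' s (F m)| ≤ B := by
    intro s
    have hcs : CauchySeq fun m => intSM' s (F m) := by
      refine Metric.cauchySeq_iff.2 fun ε hε => ?_
      obtain ⟨N, hN⟩ := hf _ (mem_nhds_zero_sm s hε)
      refine ⟨N, fun m hm n hn => ?_⟩
      have h2 := hN m hm n hn
      simp only [Set.mem_setOf_eq] at h2
      rw [hsub m n] at h2
      rw [Real.dist_eq, ← hintsub s m n]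
      exact h2
    obtain ⟨R, hR0, hR⟩ := cauchySeq_bdd hcs
    refine ⟨R + |intSM' s (F 0)|, fun m => ?_⟩
    have h3 := hR m 0
    rw [Real.dist_eq] at h3
    have h4 := abs_add_le (intSM' s (F m) - intSM' s (F 0)) (intSM' s (F 0))
    rw [sub_add_cancel] at h4
    linarith
  have hbd : ∃ C : ℝ, ∀ m x, |F m x| ≤ C := by
    by_contra hcon
    push_neg at hcon
    have hcon' : ∀ j : ℕ, ∃ m x, (j : ℝ) < |F m x| := fun j => hcon j
    choose nn xx hxx using hcon'
    have hTj : ∀ j : ℕ, ∃ T : lp (fun _ : ℕ => ℝ) 1 →L[ℝ] ℝ,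
        ∀ a, T a = ∑' k, a k * F (nn j) (xx k) := by
      intro j
      obtain ⟨hm, C, hC⟩ := (f (nn j)).2
      exact exists_pairCLM _ C (fun k => hC _)
    choose T hT using hTj
    have hub : ∀ a : lp (fun _ : ℕ => ℝ) 1, ∃ B, ∀ j, ‖T j a‖ ≤ B := by
      intro a
      have hsa : Summable fun k => |(a k : ℝ)| := by
        simpa [Real.norm_eq_abs] using lp_summable_norm a
      obtain ⟨s, hs⟩ := exists_sm xx (fun k => a k) hsa
      obtain ⟨B, hB⟩ := hC2 s
      refine ⟨B, fun j => ?_⟩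
      rw [hT j a, ← hs (F (nn j)) (f (nn j)).2]
      simpa [Real.norm_eq_abs] using hB (nn j)
    obtain ⟨C', hC'⟩ := my_ubp T hub
    set j := ⌈C'⌉₊ + 1 with hj
    have h1 : (j : ℝ) < |F (nn j) (xx j)| := hxx j
    have e : T j (lp.single 1 j 1) = F (nn j) (xx j) := by
      rw [hT]
      rw [tsum_eq_single j (fun k hk => by
        rw [lp.single_apply_ne 1 j _ hk]; ring)]
      rw [lp.single_apply_self]; ring
    have hnorm : ‖(lp.single 1 j 1 : lp (fun _ : ℕ => ℝ) 1)‖ = 1 := by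
      have h5 := lp.norm_single (E := fun _ : ℕ => ℝ) (p := 1) (by norm_num) j (1:ℝ)
      simpa using h5
    have h2 : |F (nn j) (xx j)| ≤ C' := by
      calc |F (nn j) (xx j)| = ‖T j (lp.single 1 j 1)‖ := by rw [e, Real.norm_eq_abs]
        _ ≤ ‖T j‖ * ‖(lp.single 1 j 1 : lp (fun _ : ℕ => ℝ) 1)‖ := (T j).le_opNorm _
        _ ≤ C' := by rw [hnorm, mul_one]; exact hC' j
    have h3 : C' ≤ (⌈C'⌉₊ : ℝ) := Nat.le_ceil C'
    have h4 : ((j : ℕ) : ℝ) = (⌈C'⌉₊ : ℝ) + 1 := by push_cast [hj]; ring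
    linarith
  obtain ⟨C, hC⟩ := hbd
  have hgm : Measurable g0 :=
    measurable_of_tendsto_metrizable (fun n => (f n).2.1) (tendsto_pi_nhds.2 hg0)
  have hgb : ∀ x, |g0 x| ≤ C := fun x =>
    le_of_tendsto ((continuous_abs.tendsto _).comp (hg0 x))
      (Eventually.of_forall fun n => hC n x)
  refine ⟨⟨g0, hgm, C, hgb⟩, ?_⟩
  have hD1 : ∀ (K : Set E), IsCompact K → K.Nonempty → ∀ ε : ℝ, 0 < ε →
      ∃ N, ∀ n ≥ N, ∀ x ∈ K, |F n x - g0 x| < ε := by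
    intro K hK hne ε hε
    obtain ⟨N, hN⟩ := hC1 K hK hne (ε/2) (half_pos hε)
    refine ⟨N, fun n hn x hx => ?_⟩
    have hlim : Tendsto (fun m => |F n x - F m x|) atTop (𝓝 |F n x - g0 x|) :=
      (tendsto_const_nhds.sub (hg0 x)).abs
    have hle : |F n x - g0 x| ≤ ε/2 :=
      le_of_tendsto hlim (eventually_atTop.2 ⟨N, fun m hm => (hN n hn m hm x hx).le⟩)
    linarith
  have hD2 : ∀ (μ : Measure E) [IsFiniteMeasure μ],
      Tendsto (fun m => ∫ x, F m x ∂μ) atTop (𝓝 (∫ x, g0 x ∂μ)) := by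
    intro μ _
    exact tendsto_integral_of_dominated_convergence (fun _ => C)
      (fun n => ((f n).2.1).aestronglyMeasurable) (integrable_const C)
      (fun n => Eventually.of_forall fun x => by
        simpa [Real.norm_eq_abs] using hC n x)
      (Eventually.of_forall fun x => hg0 x)
  rw [nhds_tauKBb]
  refine tendsto_inf.2 ⟨?_, ?_⟩
  · refine tendsto_iInf.2 fun K => tendsto_iInf.2 fun hK => tendsto_iInf.2 fun hne => ?_
    rw [tendsto_comap_iff]
    refine UniformFun.tendsto_iff_tendstoUniformly.2 ?_
    refine Metric.tendstoUniformly_iff.2 fun ε hε => ?_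
    obtain ⟨N, hN⟩ := hD1 K hK hne ε hε
    refine eventually_atTop.2 ⟨N, fun n hn x => ?_⟩
    rw [Real.dist_eq, abs_sub_comm]
    exact hN n hn x x.2
  · refine tendsto_iInf.2 fun s => ?_
    rw [tendsto_comap_iff]
    have he : ((fun h : BbSub E => intSM' s h.1) ∘ f) = fun m => intSM' s (F m) := rfl
    rw [he]
    unfold intSM'
    exact ((hD2 _).sub (hD2 _))
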